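/- (i) If k ∈ {1,…,N} satisfies m_j < k < m_{j+1} for some j ∈ {0,…,n−1} (with m_0 = 0), then h(p_{k+n−j}) = n + h(p_k). (ii) If there are no degenerations of the diagonals, i.e. m_j = N−n+j for all j ∈ {1,…,n}, then h(p_k) = k−1 for all k ∈ {1,…,N}. (iii) For every j ∈ {1,…,n}, h(q_j) = h(p_{m_j}) + n, and h(p_i) ≠ h(q_j) for all i ∈ {1,…,N} and j ∈ {1,…,n}. -/

import Mathlib

open Polynomial Matrix

/-- The height of an `n`-dimensional vector polynomial. -/
noncomputable def vheight (n : ℕ) (r : Fin n → Polynomial ℂ) : WithBot ℕ :=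
  Finset.univ.sup fun j : Fin n => n • (r j).degree + ((j : ℕ) : WithBot ℕ)

/-- The class `𝓜(n,N)` of band symmetric matrices with degeneration indices `m`. -/
structure MatrixClassM (n N : ℕ) (A : Matrix (Fin N) (Fin N) ℝ) (m : ℕ → ℕ) : Prop where
  symm : A.IsSymm
  band : ∀ k l : Fin N, (n : ℤ) < |(k : ℤ) - (l : ℤ)| → A k l = 0
  m_zero : m 0 = 0
  m_last : m n = N
  m_mono : ∀ j < n, m j < m (j + 1)
  m_one : 1 < m 1
  m_le : ∀ j, 1 ≤ j → j ≤ n → m j ≤ N - n + j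
  d_pos : ∀ j < n, ∀ k l : Fin N, (l : ℕ) = (k : ℕ) + (n - j) →
      m j < (k : ℕ) + 1 → (k : ℕ) + 1 < m (j + 1) → 0 < A l k
  d_zero : ∀ j < n, ∀ k l : Fin N, (l : ℕ) = (k : ℕ) + (n - j) →
      m (j + 1) ≤ (k : ℕ) + 1 → (k : ℕ) + 1 ≤ N - n + j → A l k = 0

/-- The rank-one jump matrix `σ_k`. -/
def sigmaJump {n N : ℕ} (αc : Fin N → Fin n → ℂ) (k : Fin N) :
    Matrix (Fin n) (Fin n) ℂ :=
  Matrix.of fun i j => (starRingEnd ℂ) (αc k i) * αc k j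

/-- The inner product `⟨r,s⟩_{L²(σ)}` for vector polynomials. -/
noncomputable def L2inner {n N : ℕ} (x : Fin N → ℝ)
    (σ : Fin N → Matrix (Fin n) (Fin n) ℂ) (r s : Fin n → Polynomial ℂ) : ℂ :=
  ∑ k, ∑ i, ∑ j,
    (starRingEnd ℂ) ((r i).eval ((x k : ℂ))) * σ k i j * (s j).eval ((x k : ℂ))

/-- The interpolation set `𝕊`. -/
def interpSet {n N : ℕ} (z : Fin N → ℂ) (α : Fin N → Fin n → ℂ) :
    Set (Fin n → Polynomial ℂ) :=
  {r | ∀ k, ∑ j, α k j * (r j).eval (z k) = 0}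

/-- `𝕄(r_1) + ⋯ + 𝕄(r_m)`. -/
def polySpan {n m : ℕ} (r : Fin m → Fin n → Polynomial ℂ) :
    Set (Fin n → Polynomial ℂ) :=
  {s | ∃ c : Fin m → Polynomial ℂ, s = fun jj => ∑ i, c i * r i jj}

/-- `𝕄(r_1) + ⋯ + 𝕄(r_{j-1})`. -/
def prevSpan {n : ℕ} (r : Fin n → Fin n → Polynomial ℂ) (j : Fin n) :
    Set (Fin n → Polynomial ℂ) :=
  {s | ∃ c : Fin n → Polynomial ℂ,
      s = fun jj => ∑ i ∈ Finset.univ.filter (fun i => i < j), c i * r i jj}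

/-- `r` is a sequence of generators of `S`. -/
def IsGenSeq {n : ℕ} (S : Set (Fin n → Polynomial ℂ))
    (r : Fin n → Fin n → Polynomial ℂ) : Prop :=
  ∀ j : Fin n, r j ≠ 0 ∧ r j ∈ S \ prevSpan r j ∧
    ∀ s ∈ S \ prevSpan r j, s ≠ 0 → vheight n (r j) ≤ vheight n s


section Helpers
open Polynomial

namespace Stmt11Aux

/-- number of degenerations passed, as seen from target position `k` (1-indexed). -/
def jf (n : ℕ) (m : ℕ → ℕ) (k : ℕ) : ℕ :=
  ((Finset.Icc 1 n).filter (fun t => m t + (n - t) < k)).card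

/-- source row of target position `k` (1-indexed). -/
def src (n : ℕ) (m : ℕ → ℕ) (k : ℕ) : ℕ := k - n + jf n m k

/-- the height (as a natural number) of the vector polynomial at 1-indexed position `k`. -/
def Hh (n : ℕ) (m : ℕ → ℕ) : ℕ → ℕ
  | k => if h : k ≤ n then k - 1 else Hh n m (min (src n m k) (k - 1)) + n
  decreasing_by simp only [not_le] at h; omega

section

variable {n : ℕ} {m : ℕ → ℕ} (hn : 0 < n) (hm0 : m 0 = 0)
  (hmono : ∀ j < n, m j < m (j + 1)) (hone : 1 < m 1)

/-- monotonicity with gaps: `m a + (b - a) ≤ m b`. -/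
lemma m_ge_add (hmono : ∀ j < n, m j < m (j + 1)) :
    ∀ b a, a ≤ b → b ≤ n → m a + (b - a) ≤ m b := by
  intro b
  induction b with
  | zero =>
    intro a h1 h2
    have : a = 0 := by omega
    subst this; omega
  | succ c ih =>
    intro a h1 h2
    rcases Nat.lt_or_ge a (c+1) with h | h
    · have h1' := hmono c (by omega)
      have h2' := ih a (by omega) (by omega)
      omega
    · have : a = c + 1 := by omega
      subst this; omega

lemma m_lb (hmono : ∀ j < n, m j < m (j + 1)) (hone : 1 < m 1) :
    ∀ j, 1 ≤ j → j ≤ n → j + 1 ≤ m j := by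
  intro j h1 h2
  have := m_ge_add hmono j 1 h1 h2
  omega

lemma f_mono (hm0 : m 0 = 0) (hmono : ∀ j < n, m j < m (j + 1)) :
    ∀ a b, a ≤ b → b ≤ n → m a + (n - a) ≤ m b + (n - b) := by
  intro a b hab hbn
  have := m_ge_add hmono b a hab hbn
  omega

lemma jf_spec (hn : 0 < n) (hm0 : m 0 = 0) (hmono : ∀ j < n, m j < m (j + 1))
    {k : ℕ} (hk1 : n < k) (hk2 : k ≤ m n) :
    jf n m k < n ∧ m (jf n m k) + (n - jf n m k) < k ∧
      k ≤ m (jf n m k + 1) + (n - (jf n m k + 1)) := by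
  set S := (Finset.Icc 1 n).filter (fun t => m t + (n - t) < k) with hS
  set j := S.card with hj
  have hnotmem : n ∉ S := by
    simp only [hS, Finset.mem_filter]
    rintro ⟨-, h⟩; omega
  have hsubn : S ⊆ Finset.Icc 1 n := Finset.filter_subset _ _
  have hjn : j < n := by
    have hsub : S ⊆ Finset.Ioo 0 n := by
      intro t ht
      have := hsubn ht
      simp only [Finset.mem_Icc] at this
      simp only [Finset.mem_Ioo]
      refine ⟨by omega, lt_of_le_of_ne this.2 ?_⟩
      rintro rfl; exact hnotmem ht
    have hcard := Finset.card_le_card hsub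
    have : (Finset.Ioo 0 n).card = n - 1 := by rw [Nat.card_Ioo]; omega
    omega
  -- S is downward closed in [1, n]
  have hdc : ∀ s ∈ S, ∀ t, 1 ≤ t → t ≤ s → t ∈ S := by
    intro s hs t h1 h2
    simp only [hS, Finset.mem_filter, Finset.mem_Icc] at hs ⊢
    have := f_mono hm0 hmono t s h2 hs.1.2
    exact ⟨⟨h1, le_trans h2 hs.1.2⟩, by omega⟩
  have hIcc : Finset.Icc 1 j ⊆ S := by
    intro t ht
    simp only [Finset.mem_Icc] at ht
    by_contra htS
    have : S ⊆ Finset.Icc 1 (t - 1) := by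
      intro s hs
      have h1 := hsubn hs
      simp only [Finset.mem_Icc] at h1 ⊢
      refine ⟨h1.1, ?_⟩
      by_contra hc
      exact htS (hdc s hs t ht.1 (by omega))
    have := Finset.card_le_card this
    simp only [Nat.card_Icc] at this
    omega
  have hSeq : S = Finset.Icc 1 j := by
    refine (Finset.eq_of_subset_of_card_le hIcc ?_).symm
    simp [Nat.card_Icc]; exact le_of_eq hj.symm
  have hlow : m j + (n - j) < k := by
    rcases Nat.eq_zero_or_pos j with h0 | h0
    · rw [h0, hm0]; omega
    · have : j ∈ S := hSeq ▸ (by simp only [Finset.mem_Icc]; omega)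
      simp only [hS, Finset.mem_filter] at this
      exact this.2
  have hhigh : k ≤ m (j + 1) + (n - (j + 1)) := by
    have : j + 1 ∉ S := by
      rw [hSeq]; simp only [Finset.mem_Icc]; omega
    simp only [hS, Finset.mem_filter, Finset.mem_Icc, not_and, not_lt] at this
    exact this ⟨by omega, by omega⟩
  exact ⟨hjn, hlow, hhigh⟩

lemma src_spec (hn : 0 < n) (hm0 : m 0 = 0) (hmono : ∀ j < n, m j < m (j + 1))
    {k : ℕ} (hk1 : n < k) (hk2 : k ≤ m n) :
    m (jf n m k) < src n m k ∧ src n m k < m (jf n m k + 1) ∧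
      1 ≤ src n m k ∧ src n m k < k := by
  obtain ⟨h1, h2, h3⟩ := jf_spec hn hm0 hmono hk1 hk2
  unfold src
  omega

lemma src_not_m (hn : 0 < n) (hm0 : m 0 = 0) (hmono : ∀ j < n, m j < m (j + 1))
    {k : ℕ} (hk1 : n < k) (hk2 : k ≤ m n) :
    ∀ t, 1 ≤ t → t ≤ n → m t ≠ src n m k := by
  intro t ht1 ht2 heq
  obtain ⟨h1, h2, h3, h4⟩ := src_spec hn hm0 hmono hk1 hk2
  obtain ⟨hjn, -, -⟩ := jf_spec hn hm0 hmono hk1 hk2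
  rcases le_or_gt t (jf n m k) with h | h
  · have := m_ge_add hmono (jf n m k) t h (by omega)
    omega
  · have := m_ge_add hmono t (jf n m k + 1) h ht2
    omega

lemma jf_mono {k1 k2 : ℕ} (h : k1 ≤ k2) : jf n m k1 ≤ jf n m k2 := by
  apply Finset.card_le_card
  intro t ht
  simp only [Finset.mem_filter] at ht ⊢
  exact ⟨ht.1, by omega⟩

lemma src_strictMono {k1 k2 : ℕ} (h1 : n < k1) (h : k1 < k2) :
    src n m k1 < src n m k2 := by
  have := jf_mono (m := m) (n := n) (le_of_lt h)
  unfold src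
  omega

lemma Hh_le {k : ℕ} (h : k ≤ n) : Hh n m k = k - 1 := by
  unfold Hh; simp [h]

lemma Hh_gt (hn : 0 < n) (hm0 : m 0 = 0) (hmono : ∀ j < n, m j < m (j + 1))
    {k : ℕ} (hk1 : n < k) (hk2 : k ≤ m n) :
    Hh n m k = Hh n m (src n m k) + n := by
  obtain ⟨-, -, -, h4⟩ := src_spec hn hm0 hmono hk1 hk2
  have hmin : min (src n m k) (k - 1) = src n m k := by omega
  conv_lhs => rw [Hh]
  rw [dif_neg (by omega), hmin]

lemma Hh_strictMono (hn : 0 < n) (hm0 : m 0 = 0) (hmono : ∀ j < n, m j < m (j + 1)) :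
    ∀ k2 k1, 1 ≤ k1 → k1 < k2 → k2 ≤ m n → Hh n m k1 < Hh n m k2 := by
  intro k2
  induction k2 using Nat.strong_induction_on with
  | _ k2 ih =>
    intro k1 h1 h12 h2n
    rcases le_or_gt k2 n with hc | hc
    · rw [Hh_le (le_of_lt (lt_of_lt_of_le h12 hc)), Hh_le hc]; omega
    · obtain ⟨hs1, hs2, hs3, hs4⟩ := src_spec hn hm0 hmono hc h2n
      rw [Hh_gt hn hm0 hmono hc h2n]
      rcases le_or_gt k1 n with hc1 | hc1
      · rw [Hh_le hc1]; omega
      · obtain ⟨ht1, ht2, ht3, ht4⟩ := src_spec hn hm0 hmono hc1 (by omega)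
        rw [Hh_gt hn hm0 hmono hc1 (by omega)]
        have hss := src_strictMono (m := m) hc1 h12
        have := ih (src n m k2) hs4 (src n m k1) ht3 hss (by omega)
        omega

lemma Hh_mono (hn : 0 < n) (hm0 : m 0 = 0) (hmono : ∀ j < n, m j < m (j + 1)) :
    ∀ k2 k1, 1 ≤ k1 → k1 ≤ k2 → k2 ≤ m n → Hh n m k1 ≤ Hh n m k2 := by
  intro k2 k1 h1 h12 h2
  rcases Nat.eq_or_lt_of_le h12 with rfl | h
  · exact le_rfl
  · exact le_of_lt (Hh_strictMono hn hm0 hmono k2 k1 h1 h h2)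

end
end Stmt11Aux
namespace Stmt11Aux

lemma wb_nsmul_bot {n : ℕ} (hn : 0 < n) : n • (⊥ : WithBot ℕ) = ⊥ := by
  induction n with
  | zero => omega
  | succ k ih =>
    rw [succ_nsmul]
    simp

lemma wb_nsmul_coe (n a : ℕ) : n • ((a : ℕ) : WithBot ℕ) = ((n * a : ℕ) : WithBot ℕ) := by
  exact_mod_cast rfl

lemma degree_C_mul {a : ℂ} (ha : a ≠ 0) (p : ℂ[X]) : (C a * p).degree = p.degree := by
  rw [degree_mul, degree_C ha, zero_add]

lemma smul_deg_le_of_le {n c : ℕ} {p : ℂ[X]} {d B : WithBot ℕ}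
    (h : p.degree ≤ d) (h2 : n • d + (c : WithBot ℕ) ≤ B) :
    n • p.degree + (c : WithBot ℕ) ≤ B :=
  le_trans (add_le_add (nsmul_le_nsmul_right h n) le_rfl) h2

lemma smul_deg_add_le {n c : ℕ} {p q : ℂ[X]} {B : WithBot ℕ}
    (hp : n • p.degree + (c : WithBot ℕ) ≤ B) (hq : n • q.degree + (c : WithBot ℕ) ≤ B) :
    n • (p + q).degree + (c : WithBot ℕ) ≤ B := by
  rcases le_total p.degree q.degree with h | h
  · exact smul_deg_le_of_le ((degree_add_le p q).trans_eq (max_eq_right h)) hq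
  · exact smul_deg_le_of_le ((degree_add_le p q).trans_eq (max_eq_left h)) hp

lemma smul_deg_sub_le {n c : ℕ} {p q : ℂ[X]} {B : WithBot ℕ}
    (hp : n • p.degree + (c : WithBot ℕ) ≤ B) (hq : n • q.degree + (c : WithBot ℕ) ≤ B) :
    n • (p - q).degree + (c : WithBot ℕ) ≤ B := by
  rcases le_total p.degree q.degree with h | h
  · exact smul_deg_le_of_le ((degree_sub_le p q).trans_eq (max_eq_right h)) hq
  · exact smul_deg_le_of_le ((degree_sub_le p q).trans_eq (max_eq_left h)) hp

lemma smul_deg_sum_le {ι : Type*} {s : Finset ι} {f : ι → ℂ[X]} {n c : ℕ} (hn : 0 < n)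
    {B : WithBot ℕ} (h : ∀ l ∈ s, n • (f l).degree + (c : WithBot ℕ) ≤ B) :
    n • (∑ l ∈ s, f l).degree + (c : WithBot ℕ) ≤ B := by
  induction s using Finset.cons_induction with
  | empty =>
    rw [Finset.sum_empty, degree_zero, wb_nsmul_bot hn, WithBot.bot_add]
    exact bot_le
  | cons a s ha ih =>
    rw [Finset.sum_cons]
    exact smul_deg_add_le (h a (Finset.mem_cons_self a s))
      (ih fun l hl => h l (Finset.mem_cons_of_mem hl))

lemma deg_le_of_smul_le {n c E B : ℕ} (hn : 0 < n) {p : ℂ[X]}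
    (h : n • p.degree + (c : WithBot ℕ) ≤ ((B : ℕ) : WithBot ℕ)) (hB : B < n * (E + 1) + c) :
    p.degree ≤ ((E : ℕ) : WithBot ℕ) := by
  rcases eq_or_ne p.degree ⊥ with hd | hd
  · rw [hd]; exact bot_le
  · obtain ⟨e, he⟩ := WithBot.ne_bot_iff_exists.mp hd
    rw [← he] at h ⊢
    have h' : n * e + c ≤ B := by
      have : n • ((e : ℕ) : WithBot ℕ) + ((c : ℕ) : WithBot ℕ)
          ≤ ((B : ℕ) : WithBot ℕ) := h
      rw [wb_nsmul_coe, ← Nat.cast_add] at this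
      exact_mod_cast this
    have he' : e ≤ E := by
      by_contra hc
      have : n * (E + 1) ≤ n * e := Nat.mul_le_mul_left n (by omega)
      omega
    exact WithBot.coe_le_coe.mpr he'

lemma vheight_eq_of {n : ℕ} (hn : 0 < n) (r : Fin n → ℂ[X]) (D c : ℕ) (hc : c < n)
    (hb : ∀ j : Fin n, n • (r j).degree + ((j : ℕ) : WithBot ℕ)
      ≤ ((n * D + c : ℕ) : WithBot ℕ))
    (he : (r ⟨c, hc⟩).degree = ((D : ℕ) : WithBot ℕ)) :
    vheight n r = ((n * D + c : ℕ) : WithBot ℕ) := by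
  apply le_antisymm
  · exact Finset.sup_le fun j _ => hb j
  · refine le_trans ?_ (Finset.le_sup (Finset.mem_univ (⟨c, hc⟩ : Fin n)))
    rw [he, wb_nsmul_coe]
    exact le_of_eq (by push_cast; ring)

lemma wb_ineq {n a c B : ℕ} (h : n * a + c ≤ B) :
    n • ((a : ℕ) : WithBot ℕ) + ((c : ℕ) : WithBot ℕ) ≤ ((B : ℕ) : WithBot ℕ) := by
  rw [wb_nsmul_coe, ← Nat.cast_add]
  exact Nat.cast_le.mpr h

lemma wb_ineq_rev {n a c B : ℕ}
    (h : n • ((a : ℕ) : WithBot ℕ) + ((c : ℕ) : WithBot ℕ) ≤ ((B : ℕ) : WithBot ℕ)) :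
    n * a + c ≤ B := by
  rw [wb_nsmul_coe, ← Nat.cast_add] at h
  exact Nat.cast_le.mp h

lemma smul_one_add_le {n c HS : ℕ} (hn : 0 < n) {dd : WithBot ℕ}
    (hd : n • dd + (c : WithBot ℕ) ≤ ((HS : ℕ) : WithBot ℕ)) :
    n • (1 + dd) + (c : WithBot ℕ) ≤ ((HS + n : ℕ) : WithBot ℕ) := by
  rcases eq_or_ne dd ⊥ with hb | hb
  · rw [hb, WithBot.add_bot, wb_nsmul_bot hn, WithBot.bot_add]
    exact bot_le
  · obtain ⟨a, ha⟩ := WithBot.ne_bot_iff_exists.mp hb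
    rw [← ha] at hd ⊢
    have h1 : n * a + c ≤ HS := wb_ineq_rev hd
    have h2 : n • ((1 + a : ℕ) : WithBot ℕ) + ((c : ℕ) : WithBot ℕ)
        ≤ ((HS + n : ℕ) : WithBot ℕ) := wb_ineq (by nlinarith)
    exact h2

lemma degree_C_mul_le (a : ℂ) (p : Polynomial ℂ) :
    (Polynomial.C a * p).degree ≤ p.degree := by
  calc (Polynomial.C a * p).degree ≤ (Polynomial.C a).degree + p.degree :=
        Polynomial.degree_mul_le _ _
    _ ≤ 0 + p.degree := add_le_add Polynomial.degree_C_le le_rfl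
    _ = p.degree := zero_add _

end Stmt11Aux
namespace Stmt11Aux

variable {n N : ℕ}

lemma key_lemma
    (n N : ℕ) (hn : 0 < n) (hnN : n < N)
    (A : Matrix (Fin N) (Fin N) ℝ) (m : ℕ → ℕ)
    (hA : MatrixClassM n N A m)
    (T : Matrix (Fin n) (Fin n) ℝ)
    (hT_upper : ∀ i j : Fin n, j < i → T i j = 0)
    (hT_diag : ∀ j : Fin n, T j j ≠ 0)
    (φ : Fin n → Fin N → Polynomial ℂ)
    (hφ_init : ∀ (j : Fin n) (i : Fin n),
      φ j (Fin.castLE (le_of_lt hnN) i) = C ((T j i : ℂ)))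
    (hφ_rec : ∀ (j : Fin n) (k : Fin N),
      (∀ i, 1 ≤ i → i ≤ n → m i ≠ (k : ℕ) + 1) →
      ∑ l, C ((A k l : ℂ)) * φ j l = X * φ j k) :
    ∀ k : Fin N,
      (∀ j : Fin n, n • (φ j k).degree + ((j : ℕ) : WithBot ℕ)
          ≤ ((Hh n m ((k : ℕ) + 1) : ℕ) : WithBot ℕ)) ∧
      (∀ c : Fin n, (c : ℕ) = Hh n m ((k : ℕ) + 1) % n →
          (φ c k).degree = ((Hh n m ((k : ℕ) + 1) / n : ℕ) : WithBot ℕ)) := by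
  have hm0 := hA.m_zero
  have hmono := hA.m_mono
  have hNm : m n = N := hA.m_last
  have hsymm : ∀ a b : Fin N, A a b = A b a := by
    intro a b
    have h := hA.symm
    rw [Matrix.IsSymm] at h
    conv_lhs => rw [← h]
    rw [Matrix.transpose_apply]
  -- the initial case
  have init : ∀ k : Fin N, (k : ℕ) < n →
      (∀ j : Fin n, n • (φ j k).degree + ((j : ℕ) : WithBot ℕ)
          ≤ ((Hh n m ((k : ℕ) + 1) : ℕ) : WithBot ℕ)) ∧
      (∀ c : Fin n, (c : ℕ) = Hh n m ((k : ℕ) + 1) % n →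
          (φ c k).degree = ((Hh n m ((k : ℕ) + 1) / n : ℕ) : WithBot ℕ)) := by
    intro k hkn
    have hkeq : k = Fin.castLE (le_of_lt hnN) ⟨(k : ℕ), hkn⟩ := Fin.ext rfl
    have hφk : ∀ j : Fin n, φ j k = C ((T j ⟨(k : ℕ), hkn⟩ : ℂ)) := by
      intro j
      conv_lhs => rw [hkeq]
      exact hφ_init j _
    have hH : Hh n m ((k : ℕ) + 1) = (k : ℕ) := by
      rw [Hh_le (by omega)]
      omega
    constructor
    · intro j
      rw [hφk j, hH]
      rcases le_or_gt ((j : ℕ)) ((k : ℕ)) with h | h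
      · refine smul_deg_le_of_le degree_C_le ?_
        rw [smul_zero, zero_add]
        exact_mod_cast h
      · have hz : T j ⟨(k : ℕ), hkn⟩ = 0 := hT_upper j ⟨(k : ℕ), hkn⟩ h
        rw [hz]
        simp only [Complex.ofReal_zero, map_zero, degree_zero]
        rw [wb_nsmul_bot hn, WithBot.bot_add]
        exact bot_le
    · intro c hc
      have hck : (c : ℕ) = (k : ℕ) := by
        rw [hc, hH, Nat.mod_eq_of_lt hkn]
      have hceq : c = (⟨(k : ℕ), hkn⟩ : Fin n) := Fin.ext hck
      rw [hφk c, hceq, hH, Nat.div_eq_of_lt hkn]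
      have hTne : ((T ⟨(k : ℕ), hkn⟩ ⟨(k : ℕ), hkn⟩ : ℝ) : ℂ) ≠ 0 := by
        exact_mod_cast hT_diag ⟨(k : ℕ), hkn⟩
      rw [degree_C hTne]
      norm_cast
  suffices h : ∀ K : ℕ, ∀ k : Fin N, (k : ℕ) ≤ K →
      (∀ j : Fin n, n • (φ j k).degree + ((j : ℕ) : WithBot ℕ)
          ≤ ((Hh n m ((k : ℕ) + 1) : ℕ) : WithBot ℕ)) ∧
      (∀ c : Fin n, (c : ℕ) = Hh n m ((k : ℕ) + 1) % n →
          (φ c k).degree = ((Hh n m ((k : ℕ) + 1) / n : ℕ) : WithBot ℕ)) by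
    exact fun k => h (k : ℕ) k le_rfl
  intro K
  induction K with
  | zero =>
    intro k hk
    exact init k (by omega)
  | succ K ih =>
    intro k hkK
    rcases Nat.lt_or_ge ((k : ℕ)) n with hkn | hkn
    · exact init k hkn
    -- the general case
    have hposN : (k : ℕ) + 1 ≤ m n := by rw [hNm]; omega
    have hposn : n < (k : ℕ) + 1 := by omega
    obtain ⟨hjn, hjlow, hjhigh⟩ := jf_spec hn hm0 hmono hposn hposN
    obtain ⟨hs1, hs2, hs3, hs4⟩ := src_spec hn hm0 hmono hposn hposN
    have hHpos : Hh n m ((k : ℕ) + 1) = Hh n m (src n m ((k : ℕ) + 1)) + n :=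
      Hh_gt hn hm0 hmono hposn hposN
    have hsval : src n m ((k : ℕ) + 1) = (k : ℕ) + 1 - n + jf n m ((k : ℕ) + 1) := rfl
    have hsN : src n m ((k : ℕ) + 1) - 1 < N := by omega
    set s := src n m ((k : ℕ) + 1) with hs
    set j0 := jf n m ((k : ℕ) + 1) with hj0
    set r : Fin N := ⟨s - 1, hsN⟩ with hrdef
    have hrval : (r : ℕ) = s - 1 := rfl
    have hr1 : (r : ℕ) + 1 = s := by omega
    have hrk : (r : ℕ) < (k : ℕ) := by omega
    have hkr : (k : ℕ) = (r : ℕ) + (n - j0) := by omega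
    have hnotm : ∀ i, 1 ≤ i → i ≤ n → m i ≠ (r : ℕ) + 1 := by
      intro i h1 h2
      rw [hr1]
      exact src_not_m hn hm0 hmono hposn hposN i h1 h2
    have hIHr := ih r (by omega)
    rw [hr1] at hIHr
    have hApos : 0 < A k r := hA.d_pos j0 hjn r k hkr (by omega) (by omega)
    have hane : ((A r k : ℝ) : ℂ) ≠ 0 := by
      rw [hsymm r k]
      exact_mod_cast ne_of_gt hApos
    have hsplit : ∀ j : Fin n, C ((A r k : ℂ)) * φ j k
        = X * φ j r - ∑ l ∈ Finset.univ.erase k, C ((A r l : ℂ)) * φ j l := by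
      intro j
      have h0 := hφ_rec j r hnotm
      rw [← Finset.add_sum_erase Finset.univ (fun l => C ((A r l : ℂ)) * φ j l)
        (Finset.mem_univ k)] at h0
      exact eq_sub_of_add_eq h0
    -- per-term bound on the erased sum
    have hterm : ∀ (j : Fin n), ∀ l ∈ Finset.univ.erase k,
        n • (C ((A r l : ℂ)) * φ j l).degree + ((j : ℕ) : WithBot ℕ)
          ≤ ((Hh n m ((k : ℕ) + 1) - 1 : ℕ) : WithBot ℕ) := by
      intro j l hl
      have hlk : (l : ℕ) ≠ (k : ℕ) := fun h => (Finset.ne_of_mem_erase hl) (Fin.ext h)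
      rcases Nat.lt_or_ge ((l : ℕ)) ((k : ℕ)) with hlt | hgt
      · have hIHl := (ih l (by omega)).1 j
        have hmon : Hh n m ((l : ℕ) + 1) ≤ Hh n m ((k : ℕ) + 1) - 1 := by
          have := Hh_strictMono hn hm0 hmono ((k : ℕ) + 1) ((l : ℕ) + 1)
            (by omega) (by omega) hposN
          omega
        refine smul_deg_le_of_le ?_ (le_trans hIHl ?_)
        · calc (C ((A r l : ℂ)) * φ j l).degree
              ≤ (C ((A r l : ℂ))).degree + (φ j l).degree := degree_mul_le _ _
            _ ≤ 0 + (φ j l).degree := add_le_add degree_C_le le_rfl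
            _ = (φ j l).degree := zero_add _
        · exact_mod_cast hmon
      · have hlgt : (k : ℕ) < (l : ℕ) := by omega
        have hz : A r l = 0 := by
          rcases Nat.lt_or_ge ((r : ℕ) + n) ((l : ℕ)) with hb | hb
          · apply hA.band
            have h1 : ((l : ℤ)) = (((l : ℕ) : ℤ)) := rfl
            have h2 : ((r : ℤ)) = (((r : ℕ) : ℤ)) := rfl
            rw [abs_sub_comm, h1, h2, abs_of_nonneg (by omega)]
            omega
          · have hj'lt : (r : ℕ) + n - (l : ℕ) < j0 := by omega
            have hza := hA.d_zero ((r : ℕ) + n - (l : ℕ)) (by omega) r l (by omega)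
              (by
                have := m_ge_add hmono j0 ((r : ℕ) + n - (l : ℕ) + 1) (by omega) (by omega)
                omega)
              (by
                have := l.isLt
                omega)
            rw [hsymm r l]
            exact hza
        simp only [hz, Complex.ofReal_zero, map_zero, zero_mul, degree_zero]
        rw [wb_nsmul_bot hn, WithBot.bot_add]
        exact bot_le
    have hposge1 : 1 ≤ Hh n m ((k : ℕ) + 1) := by omega
    constructor
    · intro j
      rw [← degree_C_mul hane (φ j k), hsplit j]
      refine smul_deg_sub_le ?_ ?_
      · -- X-term
        rw [degree_mul, degree_X, hHpos]
        exact smul_one_add_le hn (hIHr.1 j)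
      · refine le_trans (smul_deg_sum_le hn (hterm j)) ?_
        exact_mod_cast (by omega : Hh n m ((k : ℕ) + 1) - 1 ≤ Hh n m ((k : ℕ) + 1))
    · intro c hc
      have hcs : Hh n m s % n = (c : ℕ) := by
        rw [hc, hHpos, Nat.add_mod_right]
      have hDs : Hh n m ((k : ℕ) + 1) / n = Hh n m s / n + 1 := by
        rw [hHpos, Nat.add_div_right _ hn]
      have hIHe : (φ c r).degree = ((Hh n m s / n : ℕ) : WithBot ℕ) :=
        hIHr.2 c hcs.symm
      have hXdeg : (X * φ c r).degree = ((Hh n m s / n + 1 : ℕ) : WithBot ℕ) := by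
        rw [degree_mul, degree_X, hIHe]
        exact_mod_cast (by omega : 1 + Hh n m s / n = Hh n m s / n + 1)
      have hmodeq := Nat.div_add_mod (Hh n m s) n
      have hexp : n * (Hh n m s / n + 1) = n * (Hh n m s / n) + n := by ring
      have hsumdeg : (∑ l ∈ Finset.univ.erase k, C ((A r l : ℂ)) * φ c l).degree
          ≤ ((Hh n m s / n : ℕ) : WithBot ℕ) := by
        refine (degree_sum_le _ _).trans (Finset.sup_le ?_)
        intro l hl
        refine deg_le_of_smul_le hn (hterm c l hl) ?_
        omega
      have hdiff : (X * φ c r - ∑ l ∈ Finset.univ.erase k, C ((A r l : ℂ)) * φ c l).degree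
          = ((Hh n m s / n + 1 : ℕ) : WithBot ℕ) := by
        rw [degree_sub_eq_left_of_degree_lt, hXdeg]
        rw [hXdeg]
        exact lt_of_le_of_lt hsumdeg (by exact_mod_cast Nat.lt_succ_self _)
      have hfin := hsplit c
      have h5 : (C ((A r k : ℂ)) * φ c k).degree = ((Hh n m s / n + 1 : ℕ) : WithBot ℕ) := by
        rw [hfin, hdiff]
      rw [degree_C_mul hane] at h5
      rw [h5, hDs]

end Stmt11Aux

end Helpers

/-- Heights of the vector polynomials p_k and q_j. -/
theorem stmt11
    (n N : ℕ) (hn : 0 < n) (hnN : n < N)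
    (A : Matrix (Fin N) (Fin N) ℝ) (m : ℕ → ℕ)
    (hA : MatrixClassM n N A m)
    (T : Matrix (Fin n) (Fin n) ℝ)
    (hT_upper : ∀ i j : Fin n, j < i → T i j = 0)
    (hT_diag : ∀ j : Fin n, T j j ≠ 0)
    (φ : Fin n → Fin N → Polynomial ℂ)
    (hφ_init : ∀ (j : Fin n) (i : Fin n),
      φ j (Fin.castLE (le_of_lt hnN) i) = C ((T j i : ℂ)))
    (hφ_rec : ∀ (j : Fin n) (k : Fin N),
      (∀ i, 1 ≤ i → i ≤ n → m i ≠ (k : ℕ) + 1) →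
      ∑ l, C ((A k l : ℂ)) * φ j l = X * φ j k)
    (Q : Fin n → Fin n → Polynomial ℂ)
    (hQ : ∀ (j i : Fin n) (k : Fin N), (k : ℕ) + 1 = m ((i : ℕ) + 1) →
      Q j i = X * φ j k - ∑ l, C ((A k l : ℂ)) * φ j l)
    :
    (∀ j : ℕ, j < n → ∀ k k' : Fin N, (k' : ℕ) = (k : ℕ) + (n - j) →
      m j < (k : ℕ) + 1 → (k : ℕ) + 1 < m (j + 1) →
      vheight n (fun jj => φ jj k')
        = ((n : ℕ) : WithBot ℕ) + vheight n (fun jj => φ jj k)) ∧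
    ((∀ j, 1 ≤ j → j ≤ n → m j = N - n + j) →
      ∀ k : Fin N, vheight n (fun jj => φ jj k) = ((k : ℕ) : WithBot ℕ)) ∧
    (∀ (jq : Fin n) (k : Fin N), (k : ℕ) + 1 = m ((jq : ℕ) + 1) →
      vheight n (fun jj => Q jj jq)
        = vheight n (fun jj => φ jj k) + ((n : ℕ) : WithBot ℕ)) ∧
    (∀ (i : Fin N) (jq : Fin n),
      vheight n (fun jj => φ jj i) ≠ vheight n (fun jj => Q jj jq)) := by
  open Stmt11Aux in
  have hm0 := hA.m_zero
  have hmono := hA.m_mono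
  have hone := hA.m_one
  have hNm : m n = N := hA.m_last
  have hsymm : ∀ a b : Fin N, A a b = A b a := by
    intro a b
    have h := hA.symm
    rw [Matrix.IsSymm] at h
    conv_lhs => rw [← h]
    rw [Matrix.transpose_apply]
  have hkey := Stmt11Aux.key_lemma n N hn hnN A m hA T hT_upper hT_diag φ hφ_init hφ_rec
  -- the height of p_k is Hh (k+1)
  have hvh : ∀ k : Fin N, vheight n (fun jj => φ jj k)
      = ((Stmt11Aux.Hh n m ((k : ℕ) + 1) : ℕ) : WithBot ℕ) := by
    intro k
    have hmd := Nat.div_add_mod (Stmt11Aux.Hh n m ((k : ℕ) + 1)) n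
    have h1 := (hkey k).1
    have h2 := (hkey k).2 ⟨Stmt11Aux.Hh n m ((k : ℕ) + 1) % n, Nat.mod_lt _ hn⟩ rfl
    have h3 := Stmt11Aux.vheight_eq_of hn (fun jj => φ jj k)
      (Stmt11Aux.Hh n m ((k : ℕ) + 1) / n) (Stmt11Aux.Hh n m ((k : ℕ) + 1) % n)
      (Nat.mod_lt _ hn) (fun j => by rw [hmd]; exact h1 j) h2
    rw [hmd] at h3
    exact h3
  -- the height of q_jq
  have hqh : ∀ (jq : Fin n) (k : Fin N), (k : ℕ) + 1 = m ((jq : ℕ) + 1) →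
      vheight n (fun jj => Q jj jq)
        = ((Stmt11Aux.Hh n m ((k : ℕ) + 1) + n : ℕ) : WithBot ℕ) := by
    intro jq k hk
    have hposN : (k : ℕ) + 1 ≤ m n := by rw [hNm]; omega
    set Hk := Stmt11Aux.Hh n m ((k : ℕ) + 1) with hHk
    have harith : n * (Hk / n + 1) + Hk % n = Hk + n := by
      have hmd := Nat.div_add_mod Hk n
      have hexp : n * (Hk / n + 1) = n * (Hk / n) + n := by ring
      omega
    have hterm : ∀ (j : Fin n), ∀ l : Fin N,
        n • (C ((A k l : ℂ)) * φ j l).degree + ((j : ℕ) : WithBot ℕ)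
          ≤ ((Hk + n - 1 : ℕ) : WithBot ℕ) := by
      intro j l
      rcases le_or_gt ((l : ℕ)) ((k : ℕ)) with hle | hgt
      · refine Stmt11Aux.smul_deg_le_of_le (Stmt11Aux.degree_C_mul_le _ _)
          (le_trans ((hkey l).1 j) ?_)
        have h1 : Stmt11Aux.Hh n m ((l : ℕ) + 1) ≤ Hk :=
          Stmt11Aux.Hh_mono hn hm0 hmono ((k : ℕ) + 1) ((l : ℕ) + 1) (by omega)
            (by omega) hposN
        exact_mod_cast (by omega : Stmt11Aux.Hh n m ((l : ℕ) + 1) ≤ Hk + n - 1)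
      · have hz0 : A k l = 0 → n • (C ((A k l : ℂ)) * φ j l).degree + ((j : ℕ) : WithBot ℕ)
            ≤ ((Hk + n - 1 : ℕ) : WithBot ℕ) := by
          intro hz
          simp only [hz, Complex.ofReal_zero, map_zero, zero_mul, degree_zero]
          rw [Stmt11Aux.wb_nsmul_bot hn, WithBot.bot_add]
          exact bot_le
        by_cases hband : (k : ℕ) + n < (l : ℕ)
        · refine hz0 ?_
          apply hA.band
          have h1 : ((l : ℤ)) = (((l : ℕ) : ℤ)) := rfl
          have h2 : ((k : ℤ)) = (((k : ℕ) : ℤ)) := rfl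
          rw [abs_sub_comm, h2, h1, abs_of_nonneg (by omega)]
          omega
        · by_cases hj'le : (k : ℕ) + n - (l : ℕ) ≤ (jq : ℕ)
          · refine hz0 ?_
            have hjq := jq.isLt
            have hza := hA.d_zero ((k : ℕ) + n - (l : ℕ)) (by omega) k l (by omega)
              (by
                have := Stmt11Aux.m_ge_add hmono ((jq : ℕ) + 1) ((k : ℕ) + n - (l : ℕ) + 1)
                  (by omega) (by omega)
                omega)
              (by
                have := l.isLt
                omega)
            rw [hsymm k l]
            exact hza
          · -- j' > jq : use height bound
            have hjq := jq.isLt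
            refine Stmt11Aux.smul_deg_le_of_le (Stmt11Aux.degree_C_mul_le _ _)
              (le_trans ((hkey l).1 j) ?_)
            have hHl : Stmt11Aux.Hh n m ((l : ℕ) + 1) ≤ Hk + n - 1 := by
              rcases le_or_gt ((l : ℕ) + 1) n with hsm | hbig
              · rw [Stmt11Aux.Hh_le hsm]
                omega
              · have hjfb : Stmt11Aux.jf n m ((l : ℕ) + 1) ≤ (jq : ℕ) := by
                  have hsub : (Finset.Icc 1 n).filter
                        (fun t => m t + (n - t) < (l : ℕ) + 1)
                      ⊆ Finset.Icc 1 ((jq : ℕ)) := by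
                    intro t htm
                    simp only [Finset.mem_filter, Finset.mem_Icc] at htm ⊢
                    refine ⟨htm.1.1, ?_⟩
                    by_contra hc
                    have := Stmt11Aux.m_ge_add hmono t ((jq : ℕ) + 1) (by omega) htm.1.2
                    omega
                  have hcard := Finset.card_le_card hsub
                  rw [Nat.card_Icc] at hcard
                  rw [Stmt11Aux.jf]
                  omega
                have hlN : (l : ℕ) + 1 ≤ m n := by rw [hNm]; exact l.isLt
                obtain ⟨hs1', hs2', hs3', hs4'⟩ := Stmt11Aux.src_spec hn hm0 hmono hbig hlN
                have hsle : Stmt11Aux.src n m ((l : ℕ) + 1) ≤ (k : ℕ) := by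
                  have hsd : Stmt11Aux.src n m ((l : ℕ) + 1)
                      = (l : ℕ) + 1 - n + Stmt11Aux.jf n m ((l : ℕ) + 1) := rfl
                  omega
                have hgt' := Stmt11Aux.Hh_gt hn hm0 hmono hbig hlN
                have hlt : Stmt11Aux.Hh n m (Stmt11Aux.src n m ((l : ℕ) + 1)) < Hk :=
                  Stmt11Aux.Hh_strictMono hn hm0 hmono ((k : ℕ) + 1) _ hs3' (by omega) hposN
                omega
            exact_mod_cast hHl
    have hQe : ∀ j : Fin n, Q j jq = X * φ j k - ∑ l, C ((A k l : ℂ)) * φ j l :=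
      fun j => hQ j jq k hk
    have h2 := (hkey k).2 ⟨Hk % n, Nat.mod_lt _ hn⟩ rfl
    have hXdeg : (X * φ ⟨Hk % n, Nat.mod_lt _ hn⟩ k).degree
        = ((Hk / n + 1 : ℕ) : WithBot ℕ) := by
      rw [degree_mul, degree_X, h2]
      exact_mod_cast (by omega : 1 + Hk / n = Hk / n + 1)
    have hsum : (∑ l, C ((A k l : ℂ)) * φ (⟨Hk % n, Nat.mod_lt _ hn⟩ : Fin n) l).degree
        ≤ ((Hk / n : ℕ) : WithBot ℕ) := by
      refine (degree_sum_le _ _).trans (Finset.sup_le (fun l _ => ?_))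
      refine Stmt11Aux.deg_le_of_smul_le hn (hterm _ l) ?_
      have hcv : ((⟨Hk % n, Nat.mod_lt _ hn⟩ : Fin n) : ℕ) = Hk % n := rfl
      omega
    have hfin := Stmt11Aux.vheight_eq_of hn (fun jj => Q jj jq) (Hk / n + 1) (Hk % n)
      (Nat.mod_lt _ hn)
      (by
        intro j
        show n • (Q j jq).degree + ((j : ℕ) : WithBot ℕ)
          ≤ ((n * (Hk / n + 1) + Hk % n : ℕ) : WithBot ℕ)
        rw [hQe j, harith]
        refine Stmt11Aux.smul_deg_sub_le ?_ ?_
        · rw [degree_mul, degree_X]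
          exact Stmt11Aux.smul_one_add_le hn ((hkey k).1 j)
        · refine le_trans (Stmt11Aux.smul_deg_sum_le hn (fun l _ => hterm j l)) ?_
          exact_mod_cast (by omega : Hk + n - 1 ≤ Hk + n))
      (by
        show (Q (⟨Hk % n, Nat.mod_lt _ hn⟩ : Fin n) jq).degree = _
        rw [hQe _]
        rw [degree_sub_eq_left_of_degree_lt, hXdeg]
        rw [hXdeg]
        exact lt_of_le_of_lt hsum (by exact_mod_cast Nat.lt_succ_self _))
    rw [harith] at hfin
    exact hfin
  refine ⟨?_, ?_, ?_, ?_⟩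
  · -- part (i)
    intro j hj k k' hk' h1 h2
    have hmjj : j ≤ m j := by
      have := Stmt11Aux.m_ge_add hmono j 0 (by omega) (by omega)
      omega
    have hkj : j ≤ (k : ℕ) := by omega
    have hjf : Stmt11Aux.jf n m ((k' : ℕ) + 1) = j := by
      have hseq : (Finset.Icc 1 n).filter (fun t => m t + (n - t) < (k' : ℕ) + 1)
          = Finset.Icc 1 j := by
        ext t
        simp only [Finset.mem_filter, Finset.mem_Icc]
        constructor
        · rintro ⟨⟨ht1, ht2⟩, hlt⟩
          refine ⟨ht1, ?_⟩
          by_contra hc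
          have := Stmt11Aux.m_ge_add hmono t (j + 1) (by omega) ht2
          omega
        · rintro ⟨ht1, ht2⟩
          have := Stmt11Aux.m_ge_add hmono j t ht2 (by omega)
          exact ⟨⟨ht1, by omega⟩, by omega⟩
      rw [Stmt11Aux.jf, hseq, Nat.card_Icc]
      omega
    have hk'n : n < (k' : ℕ) + 1 := by omega
    have hk'N : (k' : ℕ) + 1 ≤ m n := by rw [hNm]; exact k'.isLt
    have hsrc : Stmt11Aux.src n m ((k' : ℕ) + 1) = (k : ℕ) + 1 := by
      rw [Stmt11Aux.src, hjf]
      omega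
    have hH : Stmt11Aux.Hh n m ((k' : ℕ) + 1) = Stmt11Aux.Hh n m ((k : ℕ) + 1) + n := by
      rw [Stmt11Aux.Hh_gt hn hm0 hmono hk'n hk'N, hsrc]
    rw [hvh k', hvh k, hH]
    push_cast
    ring
  · -- part (ii)
    intro hnd k
    have hHH : ∀ p, 1 ≤ p → p ≤ N → Stmt11Aux.Hh n m p = p - 1 := by
      intro p
      induction p using Nat.strong_induction_on with
      | _ p ih =>
        intro hp1 hpN
        rcases le_or_gt p n with hpn | hpn
        · exact Stmt11Aux.Hh_le hpn
        · have hjf0 : Stmt11Aux.jf n m p = 0 := by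
            rw [Stmt11Aux.jf, Finset.card_eq_zero, Finset.filter_eq_empty_iff]
            intro t ht
            simp only [Finset.mem_Icc] at ht
            simp only [not_lt]
            rw [hnd t ht.1 ht.2]
            omega
          have hsrc : Stmt11Aux.src n m p = p - n := by
            rw [Stmt11Aux.src, hjf0]
            omega
          rw [Stmt11Aux.Hh_gt hn hm0 hmono hpn (by omega), hsrc,
            ih (p - n) (by omega) (by omega) (by omega)]
          omega
    rw [hvh k, hHH ((k : ℕ) + 1) (by omega) (by omega)]
    norm_num
  · -- part (iii)
    intro jq k hk
    rw [hqh jq k hk, hvh k]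
    push_cast
    ring
  · -- part (iv)
    intro i jq
    have hjq := jq.isLt
    have hm1 : 1 ≤ m ((jq : ℕ) + 1) := by
      have := Stmt11Aux.m_lb hmono hone ((jq : ℕ) + 1) (by omega) (by omega)
      omega
    have hmN : m ((jq : ℕ) + 1) ≤ N := by
      have := Stmt11Aux.m_ge_add hmono n ((jq : ℕ) + 1) (by omega) le_rfl
      omega
    set k : Fin N := ⟨m ((jq : ℕ) + 1) - 1, by omega⟩ with hkdef
    have hk : (k : ℕ) + 1 = m ((jq : ℕ) + 1) := by
      simp only [hkdef]
      omega
    rw [hvh i, hqh jq k hk]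
    intro heq
    have heqn : Stmt11Aux.Hh n m ((i : ℕ) + 1)
        = Stmt11Aux.Hh n m ((k : ℕ) + 1) + n := by exact_mod_cast heq
    rcases le_or_gt ((i : ℕ) + 1) n with hsm | hbig
    · rw [Stmt11Aux.Hh_le hsm] at heqn
      omega
    · have hiN : (i : ℕ) + 1 ≤ m n := by rw [hNm]; exact i.isLt
      obtain ⟨hs1, hs2, hs3, hs4⟩ := Stmt11Aux.src_spec hn hm0 hmono hbig hiN
      rw [Stmt11Aux.Hh_gt hn hm0 hmono hbig hiN] at heqn
      have heq2 : Stmt11Aux.Hh n m (Stmt11Aux.src n m ((i : ℕ) + 1))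
          = Stmt11Aux.Hh n m ((k : ℕ) + 1) := by omega
      have hknn : (k : ℕ) + 1 ≤ m n := by rw [hNm]; exact k.isLt
      have hsrceq : Stmt11Aux.src n m ((i : ℕ) + 1) = (k : ℕ) + 1 := by
        rcases lt_trichotomy (Stmt11Aux.src n m ((i : ℕ) + 1)) ((k : ℕ) + 1) with h | h | h
        · have := Stmt11Aux.Hh_strictMono hn hm0 hmono ((k : ℕ) + 1)
            (Stmt11Aux.src n m ((i : ℕ) + 1)) hs3 h hknn
          omega
        · exact h
        · have := Stmt11Aux.Hh_strictMono hn hm0 hmono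
            (Stmt11Aux.src n m ((i : ℕ) + 1)) ((k : ℕ) + 1) (by omega) h (by omega)
          omega
      have := Stmt11Aux.src_not_m hn hm0 hmono hbig hiN ((jq : ℕ) + 1) (by omega) (by omega)
      rw [hsrceq, hk] at this
      exact this rfl
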